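/- arXiv:1810.01724 — 6 statements merged into one kernel-verified Lean document; each statement's English description precedes it below -/
import Mathlib

section
/- Let X be a random variable taking values in a finite set S ⊂ ℝ with probability mass function p(x) = P(X = x) and cumulative distribution function F(x) = P(X ≤ x), and define the mid-distribution transform F^mid(x) = F(x) − p(x)/2. Then Var(F^mid(X)) = Σ_{x∈S} p(x) (F^mid(x) − 1/2)² = (1 − Σ_{x∈S} p(x)³)/12. -/
lemma telescope_cdf (g : ℝ → ℝ) (p : ℝ → ℝ) (S : Finset ℝ) :
    ∑ x ∈ S, (g (∑ y ∈ S.filter (fun y => y ≤ x), p y)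
      - g ((∑ y ∈ S.filter (fun y => y ≤ x), p y) - p x))
      = g (∑ x ∈ S, p x) - g 0 := by
  induction S using Finset.induction_on_max with
  | empty => simp
  | insert a s ha ih =>
    have hnot : a ∉ s := fun h => lt_irrefl a (ha a h)
    have hfa : (insert a s).filter (fun y => y ≤ a) = insert a s := by
      apply Finset.filter_true_of_mem
      intro x hx
      rcases Finset.mem_insert.1 hx with h | h
      · exact le_of_eq h
      · exact (ha x h).le
    have hfx : ∀ x ∈ s, (insert a s).filter (fun y => y ≤ x) = s.filter (fun y => y ≤ x) := by
      intro x hx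
      rw [Finset.filter_insert]
      have : ¬ a ≤ x := not_le.2 (ha x hx)
      simp [this]
    rw [Finset.sum_insert hnot, hfa]
    have hs : ∑ x ∈ s, (g (∑ y ∈ (insert a s).filter (fun y => y ≤ x), p y)
        - g ((∑ y ∈ (insert a s).filter (fun y => y ≤ x), p y) - p x))
        = ∑ x ∈ s, (g (∑ y ∈ s.filter (fun y => y ≤ x), p y)
        - g ((∑ y ∈ s.filter (fun y => y ≤ x), p y) - p x)) :=
      Finset.sum_congr rfl (fun x hx => by rw [hfx x hx])
    rw [hs, ih, Finset.sum_insert hnot]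
    ring

/-- For a random variable taking values in a finite set `S ⊂ ℝ`
with probability mass function `p`, cumulative distribution function
`F x = ∑_{y ∈ S, y ≤ x} p y`, and mid-distribution transform
`Fmid x = F x - p x / 2`, the variance of the mid-distribution transform is
`Var(Fmid(X)) = ∑_{x ∈ S} p x * (Fmid x - 1/2)² = (1 - ∑_{x ∈ S} p x ³)/12`. -/
theorem mid_distribution_variance (S : Finset ℝ) (p : ℝ → ℝ)
    (hp : ∀ x ∈ S, 0 ≤ p x) (hsum : ∑ x ∈ S, p x = 1)
    (F : ℝ → ℝ) (hF : ∀ x, F x = ∑ y ∈ S.filter (fun y => y ≤ x), p y)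
    (Fmid : ℝ → ℝ) (hFmid : ∀ x, Fmid x = F x - p x / 2) :
    ∑ x ∈ S, p x * (Fmid x - 1 / 2) ^ 2 = (1 - ∑ x ∈ S, (p x) ^ 3) / 12 := by
  have h2 := telescope_cdf (fun t => t ^ 2) p S
  have h3 := telescope_cdf (fun t => t ^ 3) p S
  rw [hsum] at h2 h3
  have key : ∀ x ∈ S, p x * (Fmid x - 1 / 2) ^ 2
      = (1/3) * ((F x) ^ 3 - (F x - p x) ^ 3)
        - (1/2) * ((F x) ^ 2 - (F x - p x) ^ 2)
        + (1/4) * p x - (1/12) * (p x) ^ 3 := by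
    intro x _
    rw [hFmid]
    ring
  rw [Finset.sum_congr rfl key]
  simp only [Finset.sum_add_distrib, Finset.sum_sub_distrib, ← Finset.mul_sum]
  have e2 : ∑ x ∈ S, ((F x) ^ 2 - (F x - p x) ^ 2) = 1 := by
    rw [Finset.sum_congr rfl (fun x _ => by rw [hF x])]
    rw [h2]; norm_num
  have e3 : ∑ x ∈ S, ((F x) ^ 3 - (F x - p x) ^ 3) = 1 := by
    rw [Finset.sum_congr rfl (fun x _ => by rw [hF x])]
    rw [h3]; norm_num
  rw [← Finset.sum_sub_distrib, ← Finset.sum_sub_distrib, e3, e2, hsum]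
  ring
end

section
/- Let X be a random variable taking values in a finite set S ⊂ ℝ with probability mass function p, cumulative distribution function F, and mid-distribution transform F^mid(x) = F(x) − p(x)/2. Assume X is not almost surely constant, so that Σ_{x∈S} p(x)³ < 1. Define ζ(x) = √12 (F^mid(x) − 1/2)/√(1 − Σ_{x∈S} p(x)³). Then E[ζ(X)] = 0 and E[ζ(X)²] = 1. -/
lemma tel_lemma (p g : ℝ → ℝ) (S : Finset ℝ) :
    ∑ x ∈ S, (g (∑ y ∈ S.filter (fun y => y ≤ x), p y)
        - g ((∑ y ∈ S.filter (fun y => y ≤ x), p y) - p x))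
      = g (∑ x ∈ S, p x) - g 0 := by
  induction S using Finset.strongInduction with
  | _ S ih =>
    rcases S.eq_empty_or_nonempty with rfl | hne
    · simp
    · set m := S.max' hne with hm
      have hmS : m ∈ S := S.max'_mem hne
      have hfiltm : S.filter (fun y => y ≤ m) = S := by
        apply Finset.filter_true_of_mem
        intro y hy; exact S.le_max' y hy
      have herase : ∑ y ∈ S.erase m, p y = (∑ y ∈ S, p y) - p m :=
        Finset.sum_erase_eq_sub hmS
      have hfilt : ∀ x ∈ S.erase m,
          S.filter (fun y => y ≤ x) = (S.erase m).filter (fun y => y ≤ x) := by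
        intro x hx
        have hxm : x < m := lt_of_le_of_ne (S.le_max' x (Finset.mem_of_mem_erase hx))
          (Finset.ne_of_mem_erase hx)
        ext y
        simp only [Finset.mem_filter, Finset.mem_erase]
        constructor
        · rintro ⟨hyS, hyx⟩
          exact ⟨⟨fun h => absurd (h ▸ hyx) (not_le.mpr hxm), hyS⟩, hyx⟩
        · rintro ⟨⟨_, hyS⟩, hyx⟩; exact ⟨hyS, hyx⟩
      have hse : ∑ x ∈ S.erase m, (g (∑ y ∈ S.filter (fun y => y ≤ x), p y)
            - g ((∑ y ∈ S.filter (fun y => y ≤ x), p y) - p x))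
          = ∑ x ∈ S.erase m, (g (∑ y ∈ (S.erase m).filter (fun y => y ≤ x), p y)
            - g ((∑ y ∈ (S.erase m).filter (fun y => y ≤ x), p y) - p x)) :=
        Finset.sum_congr rfl (fun x hx => by rw [hfilt x hx])
      rw [← Finset.add_sum_erase _ _ hmS, hse,
        ih (S.erase m) (Finset.erase_ssubset hmS), hfiltm, herase]
      ring

/-- For a random variable taking values in a finite set `S ⊂ ℝ`
with probability mass function `p`, mid-distribution transform
`Fmid x = F x - p x / 2`, and first LP-basis function
`ζ(x) = √12 (Fmid x − 1/2)/√(1 − ∑_{x∈S} p x ³)`, assuming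
`∑_{x∈S} p x ³ < 1` (i.e. not almost surely constant), we have
`E[ζ(X)] = 0` and `E[ζ(X)²] = 1`. -/
theorem first_LP_basis_standardized (S : Finset ℝ) (p : ℝ → ℝ)
    (hp : ∀ x ∈ S, 0 ≤ p x) (hsum : ∑ x ∈ S, p x = 1)
    (F : ℝ → ℝ) (hF : ∀ x, F x = ∑ y ∈ S.filter (fun y => y ≤ x), p y)
    (Fmid : ℝ → ℝ) (hFmid : ∀ x, Fmid x = F x - p x / 2)
    (hnc : ∑ x ∈ S, (p x) ^ 3 < 1)
    (ζ : ℝ → ℝ)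
    (hζ : ∀ x, ζ x = Real.sqrt 12 * (Fmid x - 1 / 2) /
        Real.sqrt (1 - ∑ y ∈ S, (p y) ^ 3)) :
    ∑ x ∈ S, p x * ζ x = 0 ∧ ∑ x ∈ S, p x * (ζ x) ^ 2 = 1 := by
  set T := ∑ y ∈ S, (p y) ^ 3 with hT
  have hTpos : 0 < 1 - T := by linarith
  -- telescoping with g = t^2
  have h2 : ∑ x ∈ S, ((F x) ^ 2 - (F x - p x) ^ 2) = 1 - 0 := by
    have h := tel_lemma p (fun t => t ^ 2) S
    simp only [hsum] at h
    have e : ∑ x ∈ S, ((F x) ^ 2 - (F x - p x) ^ 2)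
        = ∑ x ∈ S, ((∑ y ∈ S.filter (fun y => y ≤ x), p y) ^ 2
          - ((∑ y ∈ S.filter (fun y => y ≤ x), p y) - p x) ^ 2) :=
      Finset.sum_congr rfl (fun x _ => by rw [hF x])
    rw [e, h]
    norm_num
  -- telescoping with g = t^3
  have h3 : ∑ x ∈ S, ((F x) ^ 3 - (F x - p x) ^ 3) = 1 - 0 := by
    have h := tel_lemma p (fun t => t ^ 3) S
    simp only [hsum] at h
    have e : ∑ x ∈ S, ((F x) ^ 3 - (F x - p x) ^ 3)
        = ∑ x ∈ S, ((∑ y ∈ S.filter (fun y => y ≤ x), p y) ^ 3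
          - ((∑ y ∈ S.filter (fun y => y ≤ x), p y) - p x) ^ 3) :=
      Finset.sum_congr rfl (fun x _ => by rw [hF x])
    rw [e, h]
    norm_num
  have hs2 : ∑ x ∈ S, p x * Fmid x = 1 / 2 := by
    have : ∑ x ∈ S, (2 * (p x * Fmid x)) = 1 - 0 := by
      rw [← h2]
      exact Finset.sum_congr rfl (fun x _ => by rw [hFmid x]; ring)
    rw [← Finset.mul_sum] at this
    linarith
  have hs3 : ∑ x ∈ S, (12 * (p x * (Fmid x) ^ 2)) = 4 - T := by
    have : ∑ x ∈ S, (12 * (p x * (Fmid x) ^ 2))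
        = ∑ x ∈ S, (4 * ((F x) ^ 3 - (F x - p x) ^ 3) - (p x) ^ 3) := by
      exact Finset.sum_congr rfl (fun x _ => by rw [hFmid x]; ring)
    rw [this, Finset.sum_sub_distrib, ← Finset.mul_sum, h3, ← hT]
    ring
  rw [← Finset.mul_sum] at hs3
  have hs3' : ∑ x ∈ S, p x * (Fmid x) ^ 2 = (4 - T) / 12 := by linarith
  have hsqr : (Real.sqrt 12 / Real.sqrt (1 - T)) ^ 2 = 12 / (1 - T) := by
    rw [div_pow, Real.sq_sqrt (by norm_num), Real.sq_sqrt hTpos.le]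
  have hcent : ∑ x ∈ S, p x * (Fmid x - 1 / 2) ^ 2 = (1 - T) / 12 := by
    have : ∑ x ∈ S, p x * (Fmid x - 1 / 2) ^ 2
        = ∑ x ∈ S, (p x * (Fmid x) ^ 2 - p x * Fmid x + p x / 4) := by
      exact Finset.sum_congr rfl (fun x _ => by ring)
    rw [this, Finset.sum_add_distrib, Finset.sum_sub_distrib, hs3', hs2]
    have : ∑ x ∈ S, p x / 4 = 1 / 4 := by
      rw [← Finset.sum_div, hsum]
    rw [this]; ring
  constructor
  · have : ∑ x ∈ S, p x * ζ x
        = (Real.sqrt 12 / Real.sqrt (1 - T)) * ∑ x ∈ S, (p x * Fmid x - p x / 2) := by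
      rw [Finset.mul_sum]
      exact Finset.sum_congr rfl (fun x _ => by rw [hζ x]; ring)
    rw [this, Finset.sum_sub_distrib, hs2, ← Finset.sum_div, hsum]
    norm_num
  · have : ∑ x ∈ S, p x * (ζ x) ^ 2
        = (Real.sqrt 12 / Real.sqrt (1 - T)) ^ 2 * ∑ x ∈ S, p x * (Fmid x - 1 / 2) ^ 2 := by
      rw [Finset.mul_sum]
      exact Finset.sum_congr rfl (fun x _ => by rw [hζ x]; ring)
    rw [this, hcent, hsqr]
    field_simp
end

section
/- Let x₁,…,x_n be distinct real numbers with ranks R_i = #{j : x_j ≤ x_i}. Then the empirical mid-distribution transform satisfies F̃_X^mid(x_i) = R_i/n − 1/(2n), the normalizing factor satisfies 1 − Σ_{x∈U} p̃_X(x)³ = 1 − 1/n² = (n²−1)/n², and consequently the first empirical LP-basis function satisfies T₁(x_i; F̃_X) = √(12/(n²−1)) (R_i − (n+1)/2) for each i = 1,…,n. -/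
/-- For distinct observations `x₁,…,x_n` with ranks
`R i = #{j : x j ≤ x i}`, empirical pmf `p̃(t) = #{j : x j = t}/n`, empirical cdf
`F̃(t) = #{j : x j ≤ t}/n`, mid-distribution transform `F̃mid = F̃ − p̃/2`, and
first empirical LP-basis function
`T₁(t) = √12 (F̃mid(t) − 1/2)/√(1 − ∑_{u∈U} p̃(u)³)` (with `U` the set of
distinct observed values): `F̃mid(x i) = R i/n − 1/(2n)`,
`1 − ∑_{u∈U} p̃(u)³ = (n² − 1)/n²`, and
`T₁(x i) = √(12/(n²−1)) (R i − (n+1)/2)`. -/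
theorem first_LP_basis_ranks (n : ℕ) (hn : 1 ≤ n)
    (x : Fin n → ℝ) (hx : Function.Injective x)
    (R : Fin n → ℕ)
    (hR : ∀ i, R i = (Finset.univ.filter (fun j => x j ≤ x i)).card)
    (p F Fmid T₁ : ℝ → ℝ)
    (hp : ∀ t, p t = ((Finset.univ.filter (fun j => x j = t)).card : ℝ) / n)
    (hF : ∀ t, F t = ((Finset.univ.filter (fun j => x j ≤ t)).card : ℝ) / n)
    (hFmid : ∀ t, Fmid t = F t - p t / 2)
    (hT : ∀ t, T₁ t = Real.sqrt 12 * (Fmid t - 1 / 2) /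
        Real.sqrt (1 - ∑ u ∈ Finset.image x Finset.univ, (p u) ^ 3)) :
    (∀ i, Fmid (x i) = (R i : ℝ) / n - 1 / (2 * n)) ∧
    (1 - ∑ u ∈ Finset.image x Finset.univ, (p u) ^ 3 = ((n : ℝ) ^ 2 - 1) / (n : ℝ) ^ 2) ∧
    (∀ i, T₁ (x i) = Real.sqrt (12 / ((n : ℝ) ^ 2 - 1)) * ((R i : ℝ) - ((n : ℝ) + 1) / 2)) := by
  have hn0 : (n : ℝ) ≠ 0 := by positivity
  have hpi : ∀ i, p (x i) = 1 / n := by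
    intro i
    rw [hp]
    congr 2
    have : (Finset.univ.filter (fun j => x j = x i)) = {i} := by
      ext j; simp [hx.eq_iff]
    rw [this]; simp
  have hFi : ∀ i, F (x i) = (R i : ℝ) / n := by
    intro i; rw [hF, hR]
  have h1 : ∀ i, Fmid (x i) = (R i : ℝ) / n - 1 / (2 * n) := by
    intro i
    rw [hFmid, hFi, hpi]
    ring
  have hsum : ∑ u ∈ Finset.image x Finset.univ, (p u) ^ 3 = 1 / (n : ℝ) ^ 2 := by
    rw [Finset.sum_image (fun a _ b _ h => hx h)]
    simp only [hpi]
    rw [Finset.sum_const, Finset.card_univ, Fintype.card_fin]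
    field_simp
    ring_nf
    rw [← mul_pow, mul_inv_cancel₀ hn0, one_pow]
  have h2 : 1 - ∑ u ∈ Finset.image x Finset.univ, (p u) ^ 3 = ((n : ℝ) ^ 2 - 1) / (n : ℝ) ^ 2 := by
    rw [hsum]; field_simp
  refine ⟨h1, h2, ?_⟩
  intro i
  rw [hT, h1, h2]
  rcases eq_or_lt_of_le hn with h | h
  · -- n = 1
    have hn1 : n = 1 := h.symm
    subst hn1
    have : R i = 1 := by
      rw [hR]
      rw [Finset.card_eq_one]
      exact ⟨i, by ext j; have h0 := Subsingleton.elim j i; subst h0; simp [Subsingleton.elim j 0]⟩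
    rw [this]
    norm_num
  · have hn2 : (2:ℕ) ≤ n := h
    have hpos : (0:ℝ) < (n:ℝ)^2 - 1 := by
      have : (2:ℝ) ≤ n := by exact_mod_cast hn2
      nlinarith
    have hs1 : Real.sqrt (((n:ℝ)^2 - 1) / (n:ℝ)^2) = Real.sqrt ((n:ℝ)^2 - 1) / n := by
      rw [Real.sqrt_div hpos.le, Real.sqrt_sq (by positivity)]
    have hs2 : Real.sqrt (12 / ((n:ℝ)^2 - 1)) = Real.sqrt 12 / Real.sqrt ((n:ℝ)^2 - 1) := by
      rw [Real.sqrt_div (by norm_num)]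
    have hsne : Real.sqrt ((n:ℝ)^2 - 1) ≠ 0 := by positivity
    rw [hs1, hs2]
    field_simp
    ring
end

section
/- (LP-representation of the Wilcoxon statistic.) Let n₁, n₂ ≥ 1, n = n₁ + n₂, let y_i = 0 for i = 1,…,n₁ and y_i = 1 for i = n₁+1,…,n, and let x₁,…,x_n be distinct real numbers with ranks R_i = #{j : x_j ≤ x_i}. Define T₁(y_i; F̃_Y) = −√(n₂/n₁) for i ≤ n₁ and √(n₁/n₂) for i > n₁, and T₁(x_i; F̃_X) = √(12/(n²−1)) (R_i − (n+1)/2). Then the empirical LP-comean L̂P[1,1;Y,X] = n⁻¹ Σ_{i=1}^n T₁(y_i; F̃_Y) T₁(x_i; F̃_X) satisfies L̂P[1,1;Y,X] = √(12/((n²−1) n₁ n₂)) ( Σ_{i=n₁+1}^n R_i − n₂(n+1)/2 ), i.e., it equals the standardized Wilcoxon rank-sum statistic up to the factor √((n+1)/n). -/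
open Finset in
lemma two_mul_sum_rank_card {n : ℕ} (x : Fin n → ℝ) (hx : Function.Injective x) :
    2 * ∑ i, (Finset.univ.filter (fun j => x j ≤ x i)).card = n * n + n := by
  classical
  set A := (Finset.univ : Finset (Fin n × Fin n)).filter (fun p => x p.2 ≤ x p.1) with hA
  set B := (Finset.univ : Finset (Fin n × Fin n)).filter (fun p => x p.1 ≤ x p.2) with hB
  have hsum : ∑ i, (Finset.univ.filter (fun j => x j ≤ x i)).card = A.card := by
    rw [hA, Finset.card_filter, ← Finset.univ_product_univ, Finset.sum_product]
    simp only [Finset.card_filter]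
  have hAB : A.card = B.card := by
    refine Finset.card_bij (fun p _ => Prod.swap p) ?_ ?_ ?_
    · intro p hp
      rw [hA, Finset.mem_filter] at hp
      rw [hB, Finset.mem_filter]
      exact ⟨Finset.mem_univ _, hp.2⟩
    · intro a ha b hb h; exact Prod.swap_injective h
    · intro p hp
      rw [hB, Finset.mem_filter] at hp
      refine ⟨p.swap, ?_, by simp⟩
      rw [hA, Finset.mem_filter]
      exact ⟨Finset.mem_univ _, hp.2⟩
  have hunion : A ∪ B = Finset.univ := by
    ext p
    simp only [hA, hB, Finset.mem_union, Finset.mem_filter, Finset.mem_univ, true_and, iff_true]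
    exact le_total (x p.2) (x p.1)
  have hinter : A ∩ B = Finset.univ.filter (fun p => p.1 = p.2) := by
    ext p
    simp only [hA, hB, Finset.mem_inter, Finset.mem_filter, Finset.mem_univ, true_and]
    constructor
    · rintro ⟨h1, h2⟩; exact hx (le_antisymm h2 h1)
    · rintro h; rw [h]; exact ⟨le_rfl, le_rfl⟩
  have hdiag : (Finset.univ.filter (fun p : Fin n × Fin n => p.1 = p.2)).card = n := by
    have himg : (Finset.univ.filter (fun p : Fin n × Fin n => p.1 = p.2))
        = Finset.univ.image (fun i : Fin n => (i, i)) := by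
      ext ⟨a, b⟩
      simp only [Finset.mem_filter, Finset.mem_univ, true_and, Finset.mem_image, Prod.mk.injEq]
      constructor
      · rintro rfl; exact ⟨a, rfl, rfl⟩
      · rintro ⟨i, rfl, rfl⟩; rfl
    rw [himg, Finset.card_image_of_injective _ (fun a b h => by simpa using congrArg Prod.fst h),
      Finset.card_univ, Fintype.card_fin]
  have hkey := Finset.card_union_add_card_inter A B
  rw [hunion, hinter, hdiag, Finset.card_univ] at hkey
  simp only [Fintype.card_prod, Fintype.card_fin] at hkey
  omega

lemma card_filter_lt_fin (n₁ n : ℕ) (h : n₁ ≤ n) :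
    (Finset.univ.filter (fun i : Fin n => (i : ℕ) < n₁)).card = n₁ := by
  have key : (Finset.univ.filter (fun i : Fin n => (i : ℕ) < n₁)).card = (Finset.range n₁).card := by
    refine Finset.card_bij (fun i _ => (i : ℕ)) ?_ ?_ ?_
    · intro i hi; simp only [Finset.mem_filter] at hi; simpa using hi.2
    · intro a ha b hb hab; exact Fin.val_injective hab
    · intro j hj
      simp only [Finset.mem_range] at hj
      exact ⟨⟨j, lt_of_lt_of_le hj h⟩, by simp [hj], rfl⟩
  rw [key, Finset.card_range]

lemma card_filter_ge_fin (n₁ n₂ n : ℕ) (hn : n = n₁ + n₂) :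
    (Finset.univ.filter (fun i : Fin n => n₁ ≤ (i : ℕ))).card = n₂ := by
  have h1 := card_filter_lt_fin n₁ n (by omega)
  have h2 := Finset.card_filter_add_card_filter_not
    (s := (Finset.univ : Finset (Fin n))) (p := fun i : Fin n => n₁ ≤ (i : ℕ))
  have h3 : (Finset.univ.filter (fun i : Fin n => ¬ n₁ ≤ (i : ℕ)))
      = Finset.univ.filter (fun i : Fin n => (i : ℕ) < n₁) := by
    simp [not_le]
  rw [h3, h1, Finset.card_univ, Fintype.card_fin] at h2
  omega


/-- (LP-representation of the Wilcoxon statistic.)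
For two-sample data with labels `y_i = 0` for `i ≤ n₁`, `y_i = 1` for `i > n₁`
(`n = n₁ + n₂`), distinct observations `x` with ranks `R i = #{j : x j ≤ x i}`,
first LP-basis values `TY i = −√(n₂/n₁)` for `i ≤ n₁`, `TY i = √(n₁/n₂)` for
`i > n₁`, and `TX i = √(12/(n²−1)) (R i − (n+1)/2)`, the empirical LP-comean
`L̂P[1,1] = n⁻¹ ∑ᵢ TY i * TX i` equals
`√(12/((n²−1) n₁ n₂)) (∑_{i>n₁} R i − n₂(n+1)/2)`. -/
theorem LP_comean_wilcoxon (n₁ n₂ : ℕ) (h₁ : 1 ≤ n₁) (h₂ : 1 ≤ n₂)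
    (n : ℕ) (hn : n = n₁ + n₂)
    (x : Fin n → ℝ) (hx : Function.Injective x)
    (R : Fin n → ℕ)
    (hR : ∀ i, R i = (Finset.univ.filter (fun j => x j ≤ x i)).card)
    (TY TX : Fin n → ℝ)
    (hTY0 : ∀ i : Fin n, (i : ℕ) < n₁ → TY i = -Real.sqrt ((n₂ : ℝ) / n₁))
    (hTY1 : ∀ i : Fin n, n₁ ≤ (i : ℕ) → TY i = Real.sqrt ((n₁ : ℝ) / n₂))
    (hTX : ∀ i, TX i = Real.sqrt (12 / ((n : ℝ) ^ 2 - 1)) * ((R i : ℝ) - ((n : ℝ) + 1) / 2))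
    (LP : ℝ) (hLP : LP = (n : ℝ)⁻¹ * ∑ i, TY i * TX i) :
    LP = Real.sqrt (12 / (((n : ℝ) ^ 2 - 1) * n₁ * n₂)) *
      ((∑ i ∈ Finset.univ.filter (fun i : Fin n => n₁ ≤ (i : ℕ)), (R i : ℝ))
        - (n₂ : ℝ) * ((n : ℝ) + 1) / 2) := by
  classical
  have hn2 : 2 ≤ n := by omega
  -- abbreviations
  set c : ℝ := Real.sqrt (12 / ((n : ℝ) ^ 2 - 1)) with hc
  set m : ℝ := ((n : ℝ) + 1) / 2 with hm
  set a : ℝ := Real.sqrt (n₁ : ℝ) with ha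
  set b : ℝ := Real.sqrt (n₂ : ℝ) with hb
  have ha2 : a ^ 2 = (n₁ : ℝ) := Real.sq_sqrt (by positivity)
  have hb2 : b ^ 2 = (n₂ : ℝ) := Real.sq_sqrt (by positivity)
  have hapos : 0 < a := Real.sqrt_pos.2 (by exact_mod_cast h₁)
  have hbpos : 0 < b := Real.sqrt_pos.2 (by exact_mod_cast h₂)
  have hnr : (n : ℝ) = a ^ 2 + b ^ 2 := by rw [ha2, hb2, hn]; push_cast; ring
  have hnpos : (0 : ℝ) < n := by positivity
  have hden : (0 : ℝ) < (n : ℝ) ^ 2 - 1 := by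
    have : (2 : ℝ) ≤ (n : ℝ) := by exact_mod_cast hn2
    nlinarith
  -- filters
  set F := Finset.univ.filter (fun i : Fin n => n₁ ≤ (i : ℕ)) with hF
  set G := Finset.univ.filter (fun i : Fin n => ¬ n₁ ≤ (i : ℕ)) with hG
  have hcardF : F.card = n₂ := card_filter_ge_fin n₁ n₂ n hn
  have hcardG : G.card = n₁ := by
    rw [hG]
    simp only [not_le]
    exact card_filter_lt_fin n₁ n (by omega)
  set S₁ : ℝ := ∑ i ∈ F, (R i : ℝ) with hS₁
  set S₀ : ℝ := ∑ i ∈ G, (R i : ℝ) with hS₀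
  -- total of ranks
  have htotN : 2 * ∑ i, R i = n * n + n := by
    have := two_mul_sum_rank_card x hx
    rw [show (∑ i, R i) = ∑ i, (Finset.univ.filter (fun j => x j ≤ x i)).card from
      Finset.sum_congr rfl (fun i _ => hR i)]
    exact this
  have htot : S₀ + S₁ = (n : ℝ) * m := by
    have hsplit : S₁ + S₀ = ∑ i, (R i : ℝ) := by
      rw [hS₁, hS₀, hF, hG]
      exact Finset.sum_filter_add_sum_filter_not _ _ _
    have hcast : (2 : ℝ) * ∑ i, (R i : ℝ) = (n : ℝ) * n + n := by
      exact_mod_cast congrArg (Nat.cast : ℕ → ℝ) htotN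
    rw [hm]
    nlinarith [hsplit, hcast]
  -- the two partial sums of TY * TX
  have e1 : ∑ i ∈ F, TY i * TX i = (a / b) * c * (S₁ - (n₂ : ℝ) * m) := by
    have hab : Real.sqrt ((n₁ : ℝ) / n₂) = a / b := Real.sqrt_div (by positivity) _
    calc ∑ i ∈ F, TY i * TX i
        = ∑ i ∈ F, (a / b) * c * ((R i : ℝ) - m) := by
          refine Finset.sum_congr rfl (fun i hi => ?_)
          rw [hTY1 i (by simpa [hF] using hi), hTX i, hab]; ring
      _ = (a / b) * c * ∑ i ∈ F, ((R i : ℝ) - m) := by rw [Finset.mul_sum]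
      _ = (a / b) * c * (S₁ - (n₂ : ℝ) * m) := by
          rw [Finset.sum_sub_distrib, Finset.sum_const, hcardF, ← hS₁, nsmul_eq_mul]
  have e0 : ∑ i ∈ G, TY i * TX i = -((b / a) * c) * (S₀ - (n₁ : ℝ) * m) := by
    have hab : Real.sqrt ((n₂ : ℝ) / n₁) = b / a := Real.sqrt_div (by positivity) _
    calc ∑ i ∈ G, TY i * TX i
        = ∑ i ∈ G, -((b / a) * c) * ((R i : ℝ) - m) := by
          refine Finset.sum_congr rfl (fun i hi => ?_)
          have hilt : (i : ℕ) < n₁ := by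
            have := (Finset.mem_filter.mp (hG ▸ hi)).2; omega
          rw [hTY0 i hilt, hTX i, hab]; ring
      _ = -((b / a) * c) * ∑ i ∈ G, ((R i : ℝ) - m) := by rw [Finset.mul_sum]
      _ = -((b / a) * c) * (S₀ - (n₁ : ℝ) * m) := by
          rw [Finset.sum_sub_distrib, Finset.sum_const, hcardG, ← hS₀, nsmul_eq_mul]
  -- RHS sqrt factorization
  have hsqrtR : Real.sqrt (12 / (((n : ℝ) ^ 2 - 1) * n₁ * n₂)) = c / (a * b) := by
    rw [show 12 / (((n : ℝ) ^ 2 - 1) * n₁ * n₂) = (12 / ((n : ℝ) ^ 2 - 1)) / ((n₁ : ℝ) * n₂) by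
      field_simp]
    rw [Real.sqrt_div (by positivity) _, Real.sqrt_mul (by positivity) _, ← ha, ← hb, ← hc]
    -- end
  -- split the full sum
  have hsplitsum : ∑ i, TY i * TX i = (∑ i ∈ F, TY i * TX i) + ∑ i ∈ G, TY i * TX i := by
    rw [hF, hG]; exact (Finset.sum_filter_add_sum_filter_not _ _ _).symm
  rw [hLP, hsplitsum, e1, e0, hsqrtR,
    show (n₂ : ℝ) * ((n : ℝ) + 1) / 2 = (n₂ : ℝ) * m from by rw [hm]; ring]
  have hS₀eq : S₀ = (n : ℝ) * m - S₁ := by linarith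
  rw [hS₀eq, hnr, ← ha2, ← hb2]
  have hane : a ≠ 0 := ne_of_gt hapos
  have hbne : b ≠ 0 := ne_of_gt hbpos
  have hnne : a ^ 2 + b ^ 2 ≠ 0 := by positivity
  field_simp
  ring
end

section
/- (LP-representation of the Mood statistic.) Let n₁, n₂ ≥ 1, n = n₁ + n₂, let y_i = 0 for i = 1,…,n₁ and y_i = 1 for i = n₁+1,…,n, and let x₁,…,x_n be distinct real numbers with ranks R_i = #{j : x_j ≤ x_i}. Define T₁(y_i; F̃_Y) = −√(n₂/n₁) for i ≤ n₁ and √(n₁/n₂) for i > n₁, and T₂(x_i; F̃_X) = (6√5/n²)(R_i − (n+1)/2)² − √5/2. Then the empirical LP-comean L̂P[1,2;Y,X] = n⁻¹ Σ_{i=1}^n T₁(y_i; F̃_Y) T₂(x_i; F̃_X) satisfies L̂P[1,2;Y,X] = (6√5/(n² √(n₁ n₂))) Σ_{i=n₁+1}^n { (R_i − (n+1)/2)² − (n²−1)/12 }, i.e., it equals the Mood scale statistic up to an asymptotically negligible factor. -/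
lemma aux_sum_id (n : ℕ) : ∑ k ∈ Finset.range n, (k:ℝ) = (n:ℝ)*((n:ℝ)-1)/2 := by
  induction n with
  | zero => simp
  | succ m ih =>
    rw [Finset.sum_range_succ, ih]
    push_cast; ring

lemma aux_sum_sq (n : ℕ) : ∑ k ∈ Finset.range n, (k:ℝ)^2 = (n:ℝ)*((n:ℝ)-1)*(2*(n:ℝ)-1)/6 := by
  induction n with
  | zero => simp
  | succ m ih =>
    rw [Finset.sum_range_succ, ih]
    push_cast; ring

lemma aux_center (n : ℕ) :
    ∑ k ∈ Finset.range n, (((k:ℝ)+1) - ((n:ℝ)+1)/2)^2 = (n:ℝ)*((n:ℝ)^2-1)/12 := by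
  have h1 := aux_sum_id n
  have h2 := aux_sum_sq n
  calc ∑ k ∈ Finset.range n, (((k:ℝ)+1) - ((n:ℝ)+1)/2)^2
      = ∑ k ∈ Finset.range n, ((k:ℝ)^2 - ((n:ℝ)-1)*(k:ℝ) + ((n:ℝ)-1)^2/4) :=
        Finset.sum_congr rfl (fun k _ => by ring)
    _ = (n:ℝ)*((n:ℝ)^2-1)/12 := by
        rw [Finset.sum_add_distrib, Finset.sum_sub_distrib, ← Finset.mul_sum,
          Finset.sum_const, Finset.card_range, h1, h2, nsmul_eq_mul]
        ring

/-- (LP-representation of the Mood statistic.)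
For two-sample data with labels `y_i = 0` for `i ≤ n₁`, `y_i = 1` for `i > n₁`
(`n = n₁ + n₂`), distinct observations `x` with ranks `R i = #{j : x j ≤ x i}`,
first LP-basis values `TY i = −√(n₂/n₁)` for `i ≤ n₁`, `TY i = √(n₁/n₂)` for
`i > n₁`, and second LP-basis values
`TX₂ i = (6√5/n²)(R i − (n+1)/2)² − √5/2`, the empirical LP-comean
`L̂P[1,2] = n⁻¹ ∑ᵢ TY i * TX₂ i` equals
`(6√5/(n² √(n₁ n₂))) ∑_{i>n₁} ((R i − (n+1)/2)² − (n²−1)/12)`. -/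
theorem LP_comean_mood (n₁ n₂ : ℕ) (h₁ : 1 ≤ n₁) (h₂ : 1 ≤ n₂)
    (n : ℕ) (hn : n = n₁ + n₂)
    (x : Fin n → ℝ) (hx : Function.Injective x)
    (R : Fin n → ℕ)
    (hR : ∀ i, R i = (Finset.univ.filter (fun j => x j ≤ x i)).card)
    (TY TX₂ : Fin n → ℝ)
    (hTY0 : ∀ i : Fin n, (i : ℕ) < n₁ → TY i = -Real.sqrt ((n₂ : ℝ) / n₁))
    (hTY1 : ∀ i : Fin n, n₁ ≤ (i : ℕ) → TY i = Real.sqrt ((n₁ : ℝ) / n₂))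
    (hTX : ∀ i, TX₂ i = (6 * Real.sqrt 5 / (n : ℝ) ^ 2) *
        ((R i : ℝ) - ((n : ℝ) + 1) / 2) ^ 2 - Real.sqrt 5 / 2)
    (LP : ℝ) (hLP : LP = (n : ℝ)⁻¹ * ∑ i, TY i * TX₂ i) :
    LP = (6 * Real.sqrt 5 / ((n : ℝ) ^ 2 * Real.sqrt ((n₁ : ℝ) * n₂))) *
      ∑ i ∈ Finset.univ.filter (fun i : Fin n => n₁ ≤ (i : ℕ)),
        (((R i : ℝ) - ((n : ℝ) + 1) / 2) ^ 2 - ((n : ℝ) ^ 2 - 1) / 12) := by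
  have hn1pos : (0:ℝ) < n₁ := by exact_mod_cast h₁
  have hn2pos : (0:ℝ) < n₂ := by exact_mod_cast h₂
  have hnpos : 0 < n := by omega
  have hnRpos : (0:ℝ) < n := by exact_mod_cast hnpos
  set a := Real.sqrt ((n₂:ℝ)/n₁) with ha_def
  set b := Real.sqrt ((n₁:ℝ)/n₂) with hb_def
  set s := Real.sqrt ((n₁:ℝ)*n₂) with hs_def
  set c := 6 * Real.sqrt 5 / (n:ℝ)^2 with hc_def
  set m := ((n:ℝ)^2 - 1)/12 with hm_def
  set d := c * m - Real.sqrt 5 / 2 with hd_def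
  set Q : Fin n → ℝ := fun i => ((R i : ℝ) - ((n:ℝ)+1)/2)^2 with hQ_def
  have hspos : 0 < s := Real.sqrt_pos.mpr (by positivity)
  have ha' : a * s = n₂ := by
    rw [ha_def, hs_def, ← Real.sqrt_mul (by positivity),
      show ((n₂:ℝ)/n₁) * ((n₁:ℝ)*n₂) = (n₂:ℝ)^2 by field_simp]
    exact Real.sqrt_sq (by positivity)
  have hb' : b * s = n₁ := by
    rw [hb_def, hs_def, ← Real.sqrt_mul (by positivity),
      show ((n₁:ℝ)/n₂) * ((n₁:ℝ)*n₂) = (n₁:ℝ)^2 by field_simp]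
    exact Real.sqrt_sq (by positivity)
  -- rank facts
  have Rinj : Function.Injective R := by
    intro i j hij
    by_contra hne
    have key : ∀ p q : Fin n, x p < x q → R p < R q := by
      intro p q hpq
      rw [hR p, hR q]
      apply Finset.card_lt_card
      constructor
      · intro k hk
        simp only [Finset.mem_filter, Finset.mem_univ, true_and] at hk ⊢
        exact le_trans hk hpq.le
      · intro hsub
        have hq : q ∈ Finset.univ.filter (fun j => x j ≤ x q) := by simp
        have := hsub hq
        simp only [Finset.mem_filter, Finset.mem_univ, true_and] at this
        exact absurd this (not_le.mpr hpq)
    rcases lt_trichotomy (x i) (x j) with h | h | h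
    · exact absurd hij (Nat.ne_of_lt (key i j h))
    · exact hne (hx h)
    · exact absurd hij.symm (Nat.ne_of_lt (key j i h))
  have hR1 : ∀ i, 1 ≤ R i := by
    intro i
    rw [hR]
    exact Finset.card_pos.mpr ⟨i, by simp⟩
  have hRn : ∀ i, R i ≤ n := by
    intro i
    rw [hR]
    calc (Finset.univ.filter (fun j => x j ≤ x i)).card ≤ Finset.univ.card :=
          Finset.card_filter_le _ _
      _ = n := by simp
  have himg : Finset.image R Finset.univ = Finset.Icc 1 n := by
    apply Finset.eq_of_subset_of_card_le
    · intro r hr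
      simp only [Finset.mem_image, Finset.mem_univ, true_and] at hr
      obtain ⟨i, rfl⟩ := hr
      exact Finset.mem_Icc.mpr ⟨hR1 i, hRn i⟩
    · rw [Nat.card_Icc, Finset.card_image_of_injective _ Rinj]
      simp
  have sumQ : ∑ i, Q i = (n:ℝ)*((n:ℝ)^2-1)/12 := by
    have h1 : ∑ i, Q i = ∑ r ∈ Finset.Icc 1 n, ((r:ℝ) - ((n:ℝ)+1)/2)^2 := by
      rw [← himg, Finset.sum_image (fun p _ q _ h => Rinj h)]
    rw [h1, ← Finset.Ico_add_one_right_eq_Icc, Finset.sum_Ico_eq_sum_range]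
    simp only [Nat.add_sub_cancel, Nat.succ_sub_one]
    rw [← aux_center n]
    apply Finset.sum_congr rfl
    intro k _
    push_cast
    ring
  -- cardinalities
  have hc0 : (Finset.univ.filter (fun i : Fin n => (i:ℕ) < n₁)).card = n₁ := by
    rw [Finset.card_filter, Fin.sum_univ_eq_sum_range (fun k => if k < n₁ then 1 else 0),
      ← Finset.card_filter]
    have : (Finset.range n).filter (· < n₁) = Finset.range n₁ := by
      ext k; simp; omega
    rw [this, Finset.card_range]
  have hc1 : (Finset.univ.filter (fun i : Fin n => n₁ ≤ (i:ℕ))).card = n₂ := by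
    rw [Finset.card_filter, Fin.sum_univ_eq_sum_range (fun k => if n₁ ≤ k then 1 else 0),
      ← Finset.card_filter]
    have : (Finset.range n).filter (fun k => n₁ ≤ k) = Finset.Ico n₁ n := by
      ext k; simp; omega
    rw [this, Nat.card_Ico]
    omega
  set F₀ := Finset.univ.filter (fun i : Fin n => (i:ℕ) < n₁) with hF0_def
  set F₁ := Finset.univ.filter (fun i : Fin n => n₁ ≤ (i:ℕ)) with hF1_def
  have hsplit : ∀ f : Fin n → ℝ, ∑ i, f i = ∑ i ∈ F₀, f i + ∑ i ∈ F₁, f i := by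
    intro f
    have hF1' : F₁ = Finset.univ.filter (fun i : Fin n => ¬ (i:ℕ) < n₁) := by
      rw [hF1_def]
      apply Finset.filter_congr
      intro i _
      simp [not_lt]
    rw [hF1', Finset.sum_filter_add_sum_filter_not]
  set S := ∑ i ∈ F₁, (Q i - m) with hS_def
  have htotal : ∑ i ∈ F₀, (Q i - m) + S = 0 := by
    rw [hS_def, ← hsplit (fun i => Q i - m), Finset.sum_sub_distrib, sumQ,
      Finset.sum_const, Finset.card_univ, Fintype.card_fin, nsmul_eq_mul, hm_def]
    ring
  have hF0sum : ∑ i ∈ F₀, TY i * TX₂ i = a*c*S - a*d*(n₁:ℝ) := by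
    have e1 : ∑ i ∈ F₀, TY i * TX₂ i = ∑ i ∈ F₀, ((-a*c)*(Q i - m) + (-a*d)) := by
      apply Finset.sum_congr rfl
      intro i hi
      have hi' : (i:ℕ) < n₁ := by
        rw [hF0_def] at hi
        simpa using hi
      rw [hTY0 i hi', hTX i]
      simp only [hQ_def, hd_def, hm_def]
      ring
    rw [e1, Finset.sum_add_distrib, ← Finset.mul_sum, Finset.sum_const, hc0, nsmul_eq_mul]
    have hF0Q : ∑ i ∈ F₀, (Q i - m) = -S := by linarith [htotal]
    rw [hF0Q]
    ring
  have hF1sum : ∑ i ∈ F₁, TY i * TX₂ i = b*c*S + b*d*(n₂:ℝ) := by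
    have e1 : ∑ i ∈ F₁, TY i * TX₂ i = ∑ i ∈ F₁, (b*c*(Q i - m) + b*d) := by
      apply Finset.sum_congr rfl
      intro i hi
      have hi' : n₁ ≤ (i:ℕ) := by
        rw [hF1_def] at hi
        simpa using hi
      rw [hTY1 i hi', hTX i]
      simp only [hQ_def, hd_def, hm_def]
      ring
    rw [e1, Finset.sum_add_distrib, ← Finset.mul_sum, Finset.sum_const, hc1, nsmul_eq_mul,
      ← hS_def]
    ring
  have hbal : a*(n₁:ℝ) = b*(n₂:ℝ) := by
    rw [← hb', ← ha']
    ring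
  have hab2 : a + b = (n:ℝ)/s := by
    rw [eq_div_iff hspos.ne', add_mul, ha', hb', hn]
    push_cast
    ring
  rw [hLP, hsplit (fun i => TY i * TX₂ i), hF0sum, hF1sum]
  calc (n:ℝ)⁻¹ * (a*c*S - a*d*(n₁:ℝ) + (b*c*S + b*d*(n₂:ℝ)))
      = (n:ℝ)⁻¹ * (c*(a+b)*S + d*(b*(n₂:ℝ) - a*(n₁:ℝ))) := by ring
    _ = (n:ℝ)⁻¹ * (c*((n:ℝ)/s)*S) := by rw [hab2, hbal]; ring
    _ = 6 * Real.sqrt 5 / ((n:ℝ)^2 * s) * S := by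
        rw [hc_def]
        field_simp
end

section
/- (Theorem 4: Parseval identity for the checkerboard copula.) Let Y and Z be random variables taking values in {1,…,k} with joint probability mass function p(y,z) and strictly positive marginal probability mass functions p_Y and p_Z. Let {T_0, T_1, …, T_{k−1}} be functions on {1,…,k} forming an orthonormal basis of L²(p_Y) with T_0 ≡ 1 (i.e., Σ_y p_Y(y) T_j(y) T_{j'}(y) = δ_{jj'}), and let {S_0, S_1, …, S_{k−1}} be an orthonormal basis of L²(p_Z) with S_0 ≡ 1. Let cop(u,v) = p(Q(u;Y), Q(v;Z)) / (p_Y(Q(u;Y)) p_Z(Q(v;Z))) be the checkerboard copula density. Then ∬_{[0,1]²} (cop(u,v) − 1)² du dv = Σ_{j=1}^{k−1} Σ_{ℓ=1}^{k−1} ( LP[j,ℓ;Y,Z] )², where LP[j,ℓ;Y,Z] = E[T_j(Y) S_ℓ(Z)] = Σ_{y,z} p(y,z) T_j(y) S_ℓ(z). -/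
open MeasureTheory Matrix


open MeasureTheory

lemma step_int (k : ℕ) (q F : ℕ → ℝ)
    (hq : ∀ t ∈ Finset.Icc 1 k, 0 < q t)
    (hF : ∀ z, F z = ∑ t ∈ Finset.Icc 1 z, q t) (hFk : F k = 1)
    (Q : ℝ → ℕ)
    (hQ : ∀ v ∈ Set.Ioo (0:ℝ) 1, IsLeast {z : ℕ | z ∈ Finset.Icc 1 k ∧ v ≤ F z} (Q v))
    (h : ℕ → ℝ) :
    ∫ v in (0:ℝ)..1, h (Q v) = ∑ z ∈ Finset.Icc 1 k, q z * h z := by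
  have hF0 : F 0 = 0 := by simp [hF]
  have hmono : ∀ m n, m ≤ n → n ≤ k → F m ≤ F n := by
    intro m n hmn hnk
    rw [hF, hF]
    apply Finset.sum_le_sum_of_subset_of_nonneg (Finset.Icc_subset_Icc_right hmn)
    intro t ht _
    have := Finset.mem_Icc.mp ht
    exact (hq t (Finset.mem_Icc.mpr ⟨this.1, le_trans this.2 hnk⟩)).le
  have hQval : ∀ i, i < k → ∀ v ∈ Set.Ioo (F i) (F (i+1)), Q v = i + 1 := by
    intro i hik v hv
    have hv01 : v ∈ Set.Ioo (0:ℝ) 1 := by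
      constructor
      · exact lt_of_le_of_lt (by rw [← hF0]; exact hmono 0 i (Nat.zero_le _) (le_of_lt hik)) hv.1
      · exact lt_of_lt_of_le hv.2 (by rw [← hFk]; exact hmono (i+1) k hik le_rfl)
    obtain ⟨⟨hQmem, hQle⟩, hQlb⟩ := hQ v hv01
    have h1 : Q v ≤ i + 1 := hQlb ⟨Finset.mem_Icc.mpr ⟨by omega, by omega⟩, hv.2.le⟩
    have h2 : ¬ Q v ≤ i := by
      intro hle
      have : F (Q v) ≤ F i := hmono _ _ hle (le_of_lt hik)
      exact absurd (le_trans hQle this) (not_le.mpr hv.1)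
    omega
  have hstep : ∀ z : ℕ, F (z+1) - F z = q (z+1) := by
    intro z
    rw [hF, hF, Finset.sum_Icc_succ_top (by omega : 1 ≤ z + 1)]
    ring
  have hle1 : ∀ i : ℕ, i < k → F i ≤ F (i+1) := fun i hik => hmono i (i+1) (by omega) (by omega)
  have hbad : ∀ i, i < k → {v : ℝ | ¬ (v ∈ Set.uIoc (F i) (F (i+1)) → h (Q v) = h (i+1))} ⊆ {F (i+1)} := by
    intro i hik v hv
    simp only [Set.mem_setOf_eq, Classical.not_imp] at hv
    obtain ⟨hmem, hne⟩ := hv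
    rw [Set.uIoc_of_le (hle1 i hik)] at hmem
    by_contra hvb
    apply hne
    have hvIoo : v ∈ Set.Ioo (F i) (F (i+1)) :=
      ⟨hmem.1, lt_of_le_of_ne hmem.2 (by simpa using hvb)⟩
    rw [hQval i hik v hvIoo]
  have haemem : ∀ i, i < k →
      (∀ᵐ v : ℝ, v ∈ Set.uIoc (F i) (F (i+1)) → h (Q v) = h (i+1)) := by
    intro i hik
    exact ae_iff.mpr (measure_mono_null (hbad i hik) (measure_singleton _))
  have hint : ∀ i < k, IntervalIntegrable (fun v => h (Q v)) volume (F i) (F (i+1)) := by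
    intro i hik
    rw [intervalIntegrable_iff]
    have hconst : IntegrableOn (fun _ : ℝ => h (i+1)) (Set.uIoc (F i) (F (i+1))) volume := by
      apply (integrableOn_const_iff (C := h (i+1))).mpr
      right
      rw [Set.uIoc_of_le (hle1 i hik)]
      exact measure_Ioc_lt_top
    apply hconst.congr
    exact ((ae_restrict_iff' measurableSet_uIoc).mpr (haemem i hik)).mono (fun v hv => hv.symm)
  have hadj := intervalIntegral.sum_integral_adjacent_intervals (μ := volume)
      (f := fun v => h (Q v)) (a := F) hint
  rw [hF0, hFk] at hadj
  rw [← hadj]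
  have hpiece : ∀ i ∈ Finset.range k, (∫ v in (F i)..(F (i+1)), h (Q v)) = q (i+1) * h (i+1) := by
    intro i hi
    rw [Finset.mem_range] at hi
    have e1 : (∫ v in (F i)..(F (i+1)), h (Q v)) = ∫ _v in (F i)..(F (i+1)), h (i+1) :=
      intervalIntegral.integral_congr_ae (haemem i hi)
    rw [e1, intervalIntegral.integral_const, smul_eq_mul, hstep]
  rw [Finset.sum_congr rfl hpiece, ← Finset.Ico_add_one_right_eq_Icc, Finset.sum_Ico_eq_sum_range]
  exact Finset.sum_congr (by norm_num) (fun i _ => by rw [Nat.add_comm 1 i])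


open Matrix

lemma ortho_complete (k : ℕ) (w : ℕ → ℝ) (hw : ∀ y ∈ Finset.Icc 1 k, 0 < w y)
    (T : ℕ → ℕ → ℝ)
    (horth : ∀ j ∈ Finset.range k, ∀ j' ∈ Finset.range k,
      ∑ y ∈ Finset.Icc 1 k, w y * T j y * T j' y = if j = j' then 1 else 0) :
    ∀ y ∈ Finset.Icc 1 k, ∀ y' ∈ Finset.Icc 1 k,
      ∑ j ∈ Finset.range k, T j y * T j y' = if y = y' then 1 / w y else 0 := by
  have hIccMem : ∀ i : Fin k, (i.1 + 1) ∈ Finset.Icc 1 k := by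
    intro i; have := i.2; exact Finset.mem_Icc.mpr ⟨by omega, by omega⟩
  set M : Matrix (Fin k) (Fin k) ℝ := fun j i => Real.sqrt (w (i.1+1)) * T j.1 (i.1+1) with hM
  have hicc : ∀ (g : ℕ → ℝ), ∑ y ∈ Finset.Icc 1 k, g y = ∑ i ∈ Finset.range k, g (i + 1) := by
    intro g
    rw [← Finset.Ico_add_one_right_eq_Icc, Finset.sum_Ico_eq_sum_range]
    exact Finset.sum_congr (by norm_num) (fun i _ => by rw [Nat.add_comm 1 i])
  have hMMT : M * Mᵀ = 1 := by
    ext j j'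
    rw [Matrix.mul_apply]
    simp only [Matrix.transpose_apply, Matrix.one_apply]
    have e1 : ∀ i : Fin k, M j i * M j' i = w (i.1+1) * T j.1 (i.1+1) * T j'.1 (i.1+1) := by
      intro i
      rw [hM]
      simp only
      have hs : Real.sqrt (w (i.1+1)) * Real.sqrt (w (i.1+1)) = w (i.1+1) :=
        Real.mul_self_sqrt (hw _ (hIccMem i)).le
      calc Real.sqrt (w (i.1+1)) * T j.1 (i.1+1) * (Real.sqrt (w (i.1+1)) * T j'.1 (i.1+1))
          = (Real.sqrt (w (i.1+1)) * Real.sqrt (w (i.1+1))) * T j.1 (i.1+1) * T j'.1 (i.1+1) := by ring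
        _ = w (i.1+1) * T j.1 (i.1+1) * T j'.1 (i.1+1) := by rw [hs]
    rw [Finset.sum_congr rfl (fun i _ => e1 i)]
    have e2 : ∑ i : Fin k, w (i.1+1) * T j.1 (i.1+1) * T j'.1 (i.1+1)
        = ∑ y ∈ Finset.Icc 1 k, w y * T j.1 y * T j'.1 y := by
      rw [hicc (fun y => w y * T j.1 y * T j'.1 y)]
      exact Fin.sum_univ_eq_sum_range (fun m => w (m+1) * T j.1 (m+1) * T j'.1 (m+1)) k
    rw [e2, horth j.1 (Finset.mem_range.mpr j.2) j'.1 (Finset.mem_range.mpr j'.2)]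
    simp [Fin.ext_iff]
  have hMTM : Mᵀ * M = 1 := mul_eq_one_comm.mp hMMT
  intro y hy y' hy'
  obtain ⟨hy1, hyk⟩ := Finset.mem_Icc.mp hy
  obtain ⟨hy1', hyk'⟩ := Finset.mem_Icc.mp hy'
  have hik : y - 1 < k := by omega
  have hik' : y' - 1 < k := by omega
  set i : Fin k := ⟨y - 1, hik⟩ with hi
  set i' : Fin k := ⟨y' - 1, hik'⟩ with hi'
  have hiy : i.1 + 1 = y := by simp [hi]; omega
  have hiy' : i'.1 + 1 = y' := by simp [hi']; omega
  have hent := congrFun (congrFun hMTM i) i'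
  rw [Matrix.mul_apply] at hent
  simp only [Matrix.transpose_apply, Matrix.one_apply] at hent
  have hexp : ∑ j : Fin k, M j i * M j i'
      = Real.sqrt (w y) * Real.sqrt (w y') * ∑ j ∈ Finset.range k, T j y * T j y' := by
    rw [← Fin.sum_univ_eq_sum_range (fun j => T j y * T j y') k, Finset.mul_sum]
    apply Finset.sum_congr rfl
    intro j _
    rw [hM]
    simp only [hiy, hiy']
    ring
  rw [hexp] at hent
  by_cases hyy : y = y'
  · subst hyy
    have hii : i = i' := by simp [hi, hi']
    rw [if_pos hii] at hent
    rw [if_pos rfl]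
    have hwy := hw y hy
    have hs : Real.sqrt (w y) * Real.sqrt (w y) = w y := Real.mul_self_sqrt hwy.le
    rw [hs] at hent
    field_simp
    simp only [pow_two]
    linear_combination hent
  · have hii : i ≠ i' := by
      simp only [hi, hi', ne_eq, Fin.mk.injEq]
      omega
    rw [if_neg hii] at hent
    rw [if_neg hyy]
    have hs1 : Real.sqrt (w y) ≠ 0 := (Real.sqrt_pos.mpr (hw y hy)).ne'
    have hs2 : Real.sqrt (w y') ≠ 0 := (Real.sqrt_pos.mpr (hw y' hy')).ne'
    rcases mul_eq_zero.mp hent with h0 | h0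
    · rcases mul_eq_zero.mp h0 with h1 | h1
      · exact absurd h1 hs1
      · exact absurd h1 hs2
    · exact h0


lemma parseval_sum (k : ℕ) (s : Finset ℕ) (w : ℕ → ℝ) (S : ℕ → ℕ → ℝ)
    (hcomp : ∀ z ∈ s, ∀ z' ∈ s,
      ∑ l ∈ Finset.range k, S l z * S l z' = if z = z' then 1 / w z else 0)
    (b : ℕ → ℝ) :
    ∑ l ∈ Finset.range k, (∑ z ∈ s, b z * S l z) ^ 2 = ∑ z ∈ s, (b z) ^ 2 / w z := by
  have e1 : ∀ l, (∑ z ∈ s, b z * S l z) ^ 2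
      = ∑ z ∈ s, ∑ z' ∈ s, (b z * b z') * (S l z * S l z') := by
    intro l
    rw [pow_two, Finset.sum_mul_sum]
    exact Finset.sum_congr rfl (fun z _ => Finset.sum_congr rfl (fun z' _ => by ring))
  rw [Finset.sum_congr rfl (fun l _ => e1 l), Finset.sum_comm]
  have e2 : ∀ z ∈ s, ∑ l ∈ Finset.range k, ∑ z' ∈ s, (b z * b z') * (S l z * S l z')
      = ∑ z' ∈ s, ∑ l ∈ Finset.range k, (b z * b z') * (S l z * S l z') :=
    fun z _ => Finset.sum_comm
  rw [Finset.sum_congr rfl e2]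
  apply Finset.sum_congr rfl
  intro z hz
  have e3 : ∀ z' ∈ s, ∑ l ∈ Finset.range k, (b z * b z') * (S l z * S l z')
      = if z = z' then b z * b z' * (1 / w z) else 0 := by
    intro z' hz'
    rw [← Finset.mul_sum, hcomp z hz z' hz']
    simp [mul_ite]
  rw [Finset.sum_congr rfl e3, Finset.sum_ite_eq s z (fun z' => b z * b z' * (1 / w z)), if_pos hz]
  ring



/-- (Theorem 4: Parseval identity for the checkerboard
copula.) For `Y, Z` on `{1,…,k}` with joint pmf `p`, strictly positive
marginals `pY, pZ`, orthonormal bases `{T 0,…,T (k−1)}` of `L²(pY)` and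
`{S 0,…,S (k−1)}` of `L²(pZ)` with `T 0 ≡ 1 ≡ S 0`, and checkerboard copula
density `cop u v = p (QY u) (QZ v)/(pY (QY u) pZ (QZ v))`:
`∬_{[0,1]²} (cop − 1)² = ∑_{j=1}^{k−1} ∑_{ℓ=1}^{k−1} (LP[j,ℓ])²`, where
`LP[j,ℓ] = ∑_{y,z} p y z * T j y * S ℓ z`. -/
theorem checkerboard_copula_parseval (k : ℕ) (hk : 1 ≤ k)
    (p : ℕ → ℕ → ℝ)
    (hp : ∀ y ∈ Finset.Icc 1 k, ∀ z ∈ Finset.Icc 1 k, 0 ≤ p y z)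
    (hsum : ∑ y ∈ Finset.Icc 1 k, ∑ z ∈ Finset.Icc 1 k, p y z = 1)
    (pY pZ : ℕ → ℝ)
    (hpY : ∀ y, pY y = ∑ z ∈ Finset.Icc 1 k, p y z)
    (hpZ : ∀ z, pZ z = ∑ y ∈ Finset.Icc 1 k, p y z)
    (hpYpos : ∀ y ∈ Finset.Icc 1 k, 0 < pY y)
    (hpZpos : ∀ z ∈ Finset.Icc 1 k, 0 < pZ z)
    (T S : ℕ → ℕ → ℝ)
    (hT0 : ∀ y ∈ Finset.Icc 1 k, T 0 y = 1)
    (hS0 : ∀ z ∈ Finset.Icc 1 k, S 0 z = 1)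
    (hTorth : ∀ j ∈ Finset.range k, ∀ j' ∈ Finset.range k,
      ∑ y ∈ Finset.Icc 1 k, pY y * T j y * T j' y = if j = j' then 1 else 0)
    (hSorth : ∀ l ∈ Finset.range k, ∀ l' ∈ Finset.range k,
      ∑ z ∈ Finset.Icc 1 k, pZ z * S l z * S l' z = if l = l' then 1 else 0)
    (FY FZ : ℕ → ℝ)
    (hFY : ∀ y, FY y = ∑ t ∈ Finset.Icc 1 y, pY t)
    (hFZ : ∀ z, FZ z = ∑ t ∈ Finset.Icc 1 z, pZ t)
    (QY QZ : ℝ → ℕ)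
    (hQY : ∀ u ∈ Set.Ioo (0 : ℝ) 1,
      IsLeast {y : ℕ | y ∈ Finset.Icc 1 k ∧ u ≤ FY y} (QY u))
    (hQZ : ∀ v ∈ Set.Ioo (0 : ℝ) 1,
      IsLeast {z : ℕ | z ∈ Finset.Icc 1 k ∧ v ≤ FZ z} (QZ v))
    (cop : ℝ → ℝ → ℝ)
    (hcop : ∀ u v, cop u v = p (QY u) (QZ v) / (pY (QY u) * pZ (QZ v))) :
    ∫ u in (0 : ℝ)..1, ∫ v in (0 : ℝ)..1, (cop u v - 1) ^ 2 =
      ∑ j ∈ Finset.Icc 1 (k - 1), ∑ l ∈ Finset.Icc 1 (k - 1),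
        (∑ y ∈ Finset.Icc 1 k, ∑ z ∈ Finset.Icc 1 k, p y z * T j y * S l z) ^ 2 := by
  -- basic sums
  have h1Y : ∑ y ∈ Finset.Icc 1 k, pY y = 1 := by
    rw [← hsum]; exact Finset.sum_congr rfl (fun y _ => hpY y)
  have h1Z : ∑ z ∈ Finset.Icc 1 k, pZ z = 1 := by
    rw [show ∑ z ∈ Finset.Icc 1 k, pZ z
        = ∑ z ∈ Finset.Icc 1 k, ∑ y ∈ Finset.Icc 1 k, p y z from
      Finset.sum_congr rfl (fun z _ => hpZ z), Finset.sum_comm, hsum]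
  have hFYk : FY k = 1 := by rw [hFY]; exact h1Y
  have hFZk : FZ k = 1 := by rw [hFZ]; exact h1Z
  -- the integral as a weighted sum
  set H : ℕ → ℝ := fun y => ∑ z ∈ Finset.Icc 1 k, pZ z * (p y z / (pY y * pZ z) - 1) ^ 2
    with hHdef
  have hinner : ∀ u : ℝ, (∫ v in (0:ℝ)..1, (cop u v - 1) ^ 2) = H (QY u) := by
    intro u
    have hs := step_int k pZ FZ hpZpos hFZ hFZk QZ hQZ
      (fun z => (p (QY u) z / (pY (QY u) * pZ z) - 1) ^ 2)
    rw [hHdef]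
    show (∫ v in (0:ℝ)..1, (cop u v - 1) ^ 2)
        = ∑ z ∈ Finset.Icc 1 k, pZ z * (p (QY u) z / (pY (QY u) * pZ z) - 1) ^ 2
    rw [← hs]
    apply intervalIntegral.integral_congr
    intro v _
    simp only
    rw [hcop]
  have houter : (∫ u in (0:ℝ)..1, ∫ v in (0:ℝ)..1, (cop u v - 1) ^ 2)
      = ∑ y ∈ Finset.Icc 1 k, pY y * H y := by
    rw [← step_int k pY FY hpYpos hFY hFYk QY hQY H]
    apply intervalIntegral.integral_congr
    intro u _
    exact hinner u
  set X := ∑ y ∈ Finset.Icc 1 k, ∑ z ∈ Finset.Icc 1 k, (p y z) ^ 2 / (pY y * pZ z) with hX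
  -- LHS value
  have hLHS : ∑ y ∈ Finset.Icc 1 k, pY y * H y = X - 1 := by
    have hterm : ∀ y ∈ Finset.Icc 1 k, pY y * H y
        = ∑ z ∈ Finset.Icc 1 k,
            ((p y z) ^ 2 / (pY y * pZ z) - 2 * p y z + pY y * pZ z) := by
      intro y hy
      rw [hHdef]
      simp only
      rw [Finset.mul_sum]
      apply Finset.sum_congr rfl
      intro z hz
      have h1 := (hpYpos y hy).ne'
      have h2 := (hpZpos z hz).ne'
      field_simp
      ring
    rw [Finset.sum_congr rfl hterm]
    have e2 : ∑ y ∈ Finset.Icc 1 k, ∑ z ∈ Finset.Icc 1 k, 2 * p y z = 2 := by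
      have : ∀ y ∈ Finset.Icc 1 k, ∑ z ∈ Finset.Icc 1 k, 2 * p y z
          = 2 * ∑ z ∈ Finset.Icc 1 k, p y z := fun y _ => (Finset.mul_sum _ _ _).symm
      rw [Finset.sum_congr rfl this, ← Finset.mul_sum, hsum, mul_one]
    have e3 : ∑ y ∈ Finset.Icc 1 k, ∑ z ∈ Finset.Icc 1 k, pY y * pZ z = 1 := by
      have : ∀ y ∈ Finset.Icc 1 k, ∑ z ∈ Finset.Icc 1 k, pY y * pZ z = pY y := by
        intro y _
        rw [← Finset.mul_sum, h1Z, mul_one]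
      rw [Finset.sum_congr rfl this, h1Y]
    simp only [Finset.sum_add_distrib, Finset.sum_sub_distrib]
    rw [e2, e3, ← hX]
    ring
  -- completeness
  have hTcomp := ortho_complete k pY hpYpos T hTorth
  have hScomp := ortho_complete k pZ hpZpos S hSorth
  -- LP coefficients
  set A : ℕ → ℕ → ℝ := fun j l =>
    ∑ y ∈ Finset.Icc 1 k, ∑ z ∈ Finset.Icc 1 k, p y z * T j y * S l z with hA
  have htot : ∑ j ∈ Finset.range k, ∑ l ∈ Finset.range k, (A j l) ^ 2 = X := by
    have hAalt : ∀ j l, A j l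
        = ∑ z ∈ Finset.Icc 1 k, (∑ y ∈ Finset.Icc 1 k, p y z * T j y) * S l z := by
      intro j l
      rw [hA]
      simp only
      rw [Finset.sum_comm]
      exact Finset.sum_congr rfl (fun z _ => (Finset.sum_mul _ _ _).symm)
    have h1 : ∀ j ∈ Finset.range k, ∑ l ∈ Finset.range k, (A j l) ^ 2
        = ∑ z ∈ Finset.Icc 1 k, (∑ y ∈ Finset.Icc 1 k, p y z * T j y) ^ 2 / pZ z := by
      intro j _
      have : ∀ l ∈ Finset.range k, (A j l) ^ 2
          = (∑ z ∈ Finset.Icc 1 k, (∑ y ∈ Finset.Icc 1 k, p y z * T j y) * S l z) ^ 2 :=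
        fun l _ => by rw [hAalt j l]
      rw [Finset.sum_congr rfl this]
      exact parseval_sum k (Finset.Icc 1 k) pZ S hScomp _
    rw [Finset.sum_congr rfl h1, Finset.sum_comm]
    have h2 : ∀ z ∈ Finset.Icc 1 k,
        ∑ j ∈ Finset.range k, (∑ y ∈ Finset.Icc 1 k, p y z * T j y) ^ 2 / pZ z
        = ∑ y ∈ Finset.Icc 1 k, (p y z) ^ 2 / pY y / pZ z := by
      intro z _
      rw [← Finset.sum_div, parseval_sum k (Finset.Icc 1 k) pY T hTcomp (fun y => p y z),
        Finset.sum_div]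
    rw [Finset.sum_congr rfl h2, Finset.sum_comm, hX]
    exact Finset.sum_congr rfl (fun y _ => Finset.sum_congr rfl (fun z _ => by rw [div_div]))
  have h0mem : (0 : ℕ) ∈ Finset.range k := Finset.mem_range.mpr hk
  have hA0l : ∀ l ∈ Finset.range k, A 0 l = if (0 : ℕ) = l then 1 else 0 := by
    intro l hl
    rw [← hSorth 0 h0mem l hl, hA]
    simp only
    rw [Finset.sum_comm]
    apply Finset.sum_congr rfl
    intro z hz
    rw [hS0 z hz, mul_one, hpZ z, Finset.sum_mul]
    apply Finset.sum_congr rfl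
    intro y hy
    rw [hT0 y hy, mul_one]
  have hAj0 : ∀ j ∈ Finset.range k, A j 0 = if j = 0 then 1 else 0 := by
    intro j hj
    rw [← hTorth j hj 0 h0mem, hA]
    simp only
    apply Finset.sum_congr rfl
    intro y hy
    rw [hT0 y hy, mul_one, hpY y, Finset.sum_mul]
    apply Finset.sum_congr rfl
    intro z hz
    rw [hS0 z hz, mul_one]
  have hIcc_er : Finset.Icc 1 (k-1) = (Finset.range k).erase 0 := by
    ext x
    simp only [Finset.mem_Icc, Finset.mem_erase, Finset.mem_range]
    omega
  have hdec : ∑ j ∈ Finset.range k, ∑ l ∈ Finset.range k, (A j l) ^ 2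
      = 1 + ∑ j ∈ (Finset.range k).erase 0, ∑ l ∈ (Finset.range k).erase 0, (A j l) ^ 2 := by
    rw [← Finset.add_sum_erase _ _ h0mem]
    have g0 : ∑ l ∈ Finset.range k, (A 0 l) ^ 2 = 1 := by
      rw [← Finset.add_sum_erase _ _ h0mem]
      have : ∀ l ∈ (Finset.range k).erase 0, (A 0 l) ^ 2 = 0 := by
        intro l hl
        obtain ⟨hl0, hlr⟩ := Finset.mem_erase.mp hl
        rw [hA0l l hlr, if_neg (fun hc => hl0 hc.symm)]
        norm_num
      rw [Finset.sum_congr rfl this, Finset.sum_const, smul_zero, add_zero,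
        hA0l 0 h0mem, if_pos rfl, one_pow]
    have gj : ∀ j ∈ (Finset.range k).erase 0,
        ∑ l ∈ Finset.range k, (A j l) ^ 2
        = ∑ l ∈ (Finset.range k).erase 0, (A j l) ^ 2 := by
      intro j hj
      obtain ⟨hj0, hjr⟩ := Finset.mem_erase.mp hj
      rw [← Finset.add_sum_erase _ _ h0mem, hAj0 j hjr, if_neg hj0]
      norm_num
    rw [g0, Finset.sum_congr rfl gj]
  -- conclusion
  rw [houter, hLHS]
  have hrhs : ∑ j ∈ Finset.Icc 1 (k-1), ∑ l ∈ Finset.Icc 1 (k-1),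
      (∑ y ∈ Finset.Icc 1 k, ∑ z ∈ Finset.Icc 1 k, p y z * T j y * S l z) ^ 2
      = X - 1 := by
    have : ∑ j ∈ Finset.Icc 1 (k-1), ∑ l ∈ Finset.Icc 1 (k-1),
        (∑ y ∈ Finset.Icc 1 k, ∑ z ∈ Finset.Icc 1 k, p y z * T j y * S l z) ^ 2
        = ∑ j ∈ (Finset.range k).erase 0, ∑ l ∈ (Finset.range k).erase 0, (A j l) ^ 2 := by
      rw [hIcc_er]
    rw [this]
    rw [htot] at hdec
    linarith
  rw [hrhs]
end
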